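/- Let φ⁺ ∈ Φ be a maximizer of V+ over Φ. Then |max_{φ∈Φ} Vρ(φ) − Vρ(φ⁺)| ≤ 2 · max_{φ∈Φ} ( ρ̂(σ(φ)) − D(σ(φ)) ). (Loss due to decentralization: applying the first h decision rules of an optimal policy of the converted standard Dec-POMDP to the Dec-ρPOMDP loses at most twice the maximal gap between the expected centralized and decentralized prediction rewards.) -/

import Mathlib

/-- The expected centralized prediction reward `ρ̂(σ)`. -/
noncomputable def rhoHat (n : ℕ) (S : Type) [Fintype S]
    (Z : Fin n → Type) [∀ i, Fintype (Z i)]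
    (A : Type) [Fintype A] [Nonempty A] (α : A → S → ℝ)
    (σ : S → (∀ i, Z i) → ℝ) : ℝ :=
  ∑ z : ∀ i, Z i, Finset.univ.sup' Finset.univ_nonempty fun a : A => ∑ s, σ s z * α a s

/-- The expected decentralized prediction reward `D(σ)` under the optimal joint
prediction rule. -/
noncomputable def decReward (n : ℕ) (S : Type) [Fintype S]
    (Z : Fin n → Type) [∀ i, Fintype (Z i)] [∀ i, DecidableEq (Z i)]
    (A : Type) [Fintype A] [Nonempty A] (α : A → S → ℝ)
    (σ : S → (∀ i, Z i) → ℝ) : ℝ :=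
  (1 / n : ℝ) * ∑ i : Fin n, ∑ zi : Z i,
    Finset.univ.sup' Finset.univ_nonempty fun a : A =>
      ∑ z ∈ Finset.univ.filter (fun z : ∀ j, Z j => z i = zi), ∑ s, σ s z * α a s

/-- Loss due to decentralization: if `φ⁺` maximizes the converted standard
Dec-POMDP value `V⁺(φ) = C(φ) + D(σ(φ))` over `Φ`, then the loss of applying it
to the Dec-ρPOMDP (with value `Vρ(φ) = C(φ) + ρ̂(σ(φ))`) is bounded by twice the
maximal gap between the expected centralized and decentralized prediction
rewards. -/
lemma decReward_le_rhoHat (n : ℕ) (hn : 1 ≤ n) (S : Type) [Fintype S]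
    (Z : Fin n → Type) [∀ i, Fintype (Z i)] [∀ i, DecidableEq (Z i)]
    (A : Type) [Fintype A] [Nonempty A] (α : A → S → ℝ)
    (σ : S → (∀ i, Z i) → ℝ) :
    decReward n S Z A α σ ≤ rhoHat n S Z A α σ := by
  unfold decReward rhoHat
  have hstep : ∀ i : Fin n,
      (∑ zi : Z i, Finset.univ.sup' Finset.univ_nonempty fun a : A =>
        ∑ z ∈ Finset.univ.filter (fun z : ∀ j, Z j => z i = zi), ∑ s, σ s z * α a s)
      ≤ ∑ z : ∀ j, Z j, Finset.univ.sup' Finset.univ_nonempty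
          fun a : A => ∑ s, σ s z * α a s := by
    intro i
    calc (∑ zi : Z i, Finset.univ.sup' Finset.univ_nonempty fun a : A =>
        ∑ z ∈ Finset.univ.filter (fun z : ∀ j, Z j => z i = zi), ∑ s, σ s z * α a s)
        ≤ ∑ zi : Z i, ∑ z ∈ Finset.univ.filter (fun z : ∀ j, Z j => z i = zi),
            Finset.univ.sup' Finset.univ_nonempty fun a : A => ∑ s, σ s z * α a s := by
          refine Finset.sum_le_sum fun zi _ => Finset.sup'_le _ _ fun a _ =>
            Finset.sum_le_sum fun z _ => Finset.le_sup' (fun a : A => ∑ s, σ s z * α a s) (Finset.mem_univ a)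
      _ = ∑ z : ∀ j, Z j, Finset.univ.sup' Finset.univ_nonempty
            fun a : A => ∑ s, σ s z * α a s := by
          exact Finset.sum_fiberwise _ _ _
  have hn' : (0:ℝ) < n := by positivity
  calc (1 / n : ℝ) * ∑ i : Fin n, ∑ zi : Z i,
        Finset.univ.sup' Finset.univ_nonempty (fun a : A =>
          ∑ z ∈ Finset.univ.filter (fun z : ∀ j, Z j => z i = zi), ∑ s, σ s z * α a s)
      ≤ (1 / n : ℝ) * ∑ _i : Fin n, ∑ z : ∀ j, Z j,
          Finset.univ.sup' Finset.univ_nonempty (fun a : A => ∑ s, σ s z * α a s) := by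
        exact mul_le_mul_of_nonneg_left (Finset.sum_le_sum fun i _ => hstep i)
          (by positivity)
    _ = ∑ z : ∀ j, Z j, Finset.univ.sup' Finset.univ_nonempty
          (fun a : A => ∑ s, σ s z * α a s) := by
        rw [Finset.sum_const, Finset.card_univ, Fintype.card_fin, nsmul_eq_mul]
        field_simp

theorem loss_due_to_decentralization
    (n : ℕ) (hn : 1 ≤ n)
    (S : Type) [Fintype S] [Nonempty S]
    (Z : Fin n → Type) [∀ i, Fintype (Z i)] [∀ i, Nonempty (Z i)] [∀ i, DecidableEq (Z i)]
    (A : Type) [Fintype A] [Nonempty A]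
    (α : A → S → ℝ)
    (Φ : Type) [Fintype Φ] [Nonempty Φ]
    (C : Φ → ℝ)
    (σ : Φ → S → (∀ i, Z i) → ℝ)
    (hσ0 : ∀ φ s z, 0 ≤ σ φ s z)
    (hσ1 : ∀ φ, ∑ s, ∑ z, σ φ s z = 1)
    (φplus : Φ)
    (hmax : ∀ φ, C φ + decReward n S Z A α (σ φ) ≤ C φplus + decReward n S Z A α (σ φplus)) :
    |(Finset.univ.sup' Finset.univ_nonempty fun φ => C φ + rhoHat n S Z A α (σ φ))
        - (C φplus + rhoHat n S Z A α (σ φplus))|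
      ≤ 2 * Finset.univ.sup' Finset.univ_nonempty
          (fun φ => rhoHat n S Z A α (σ φ) - decReward n S Z A α (σ φ)) := by
  set g : Φ → ℝ := fun φ => rhoHat n S Z A α (σ φ) - decReward n S Z A α (σ φ) with hg
  have hg0 : ∀ φ, 0 ≤ g φ := fun φ =>
    sub_nonneg.mpr (decReward_le_rhoHat n hn S Z A α (σ φ))
  have hGsup : ∀ φ, g φ ≤ Finset.univ.sup' Finset.univ_nonempty g := fun φ =>
    Finset.le_sup' g (Finset.mem_univ φ)
  have hG0 : 0 ≤ Finset.univ.sup' Finset.univ_nonempty g :=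
    le_trans (hg0 φplus) (hGsup φplus)
  rw [abs_sub_le_iff]
  constructor
  · rw [sub_le_iff_le_add]
    refine Finset.sup'_le _ _ fun φ _ => ?_
    have h1 : C φ + rhoHat n S Z A α (σ φ)
        = (C φ + decReward n S Z A α (σ φ)) + g φ := by simp only [hg]; ring
    have h2 : C φplus + decReward n S Z A α (σ φplus)
        ≤ C φplus + rhoHat n S Z A α (σ φplus) := by
      exact add_le_add_right (decReward_le_rhoHat n hn S Z A α (σ φplus)) _
    have := hmax φ
    have hgφ := hGsup φ
    nlinarith [hG0]
  · have h := Finset.le_sup' (fun φ => C φ + rhoHat n S Z A α (σ φ)) (Finset.mem_univ φplus)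
    nlinarith [hG0]
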